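/- Let C ∈ ℝ^{n×n} be positive definite with eigenvalues λ₁ ≥ ... ≥ λₙ and corresponding orthonormal eigenvectors u₁,...,uₙ, and let 1 ≤ p < n be such that λ_p > λ_j for some j > p. Then the minimizer of log det(K) + tr(K⁻¹C) over K of the form K = Σ_{j=1}^p α_j² x_j x_jᵀ + σ²·1 with orthonormal x_j, α_j² ≥ 0, σ² > 0, is given by x_j = u_j, σ² = (1/(n-p)) Σ_{j=p+1}^n λ_j, and α_j² = λ_j − σ² > 0. -/

import Mathlib

open Matrix

/-- Negative log-likelihood `log det K + tr(K⁻¹ C)`. -/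
noncomputable def negLogLik {n : ℕ} (K C : Matrix (Fin n) (Fin n) ℝ) : ℝ :=
  Real.log K.det + (K⁻¹ * C).trace

open Finset

lemma ppca_scalar_log {a b : ℝ} (ha : 0 < a) (hb : 0 < b) :
    Real.log a + 1 ≤ Real.log b + a / b := by
  have h := Real.log_le_sub_one_of_pos (x := a / b) (div_pos ha hb)
  rw [Real.log_div ha.ne' hb.ne'] at h
  linarith

lemma ppca_weight_mono {s a b : ℝ} (hs : 0 < s) (ha : 0 ≤ a) (hab : a ≤ b) :
    a / (s * (a + s)) ≤ b / (s * (b + s)) := by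
  have h1 : 0 < s * (a + s) := by nlinarith
  have h2 : 0 < s * (b + s) := by nlinarith
  rw [div_le_div_iff₀ h1 h2]
  nlinarith [mul_nonneg (mul_pos hs hs).le (sub_nonneg.mpr hab)]

lemma ppca_abel_aux (w d : ℕ → ℝ) (hwd : ∀ j, w (j+1) ≤ w j) (p : ℕ)
    (hD : ∀ m, m < p → ∑ j ∈ Finset.range (m+1), d j ≤ 0) :
    ∀ m, m < p → ∑ j ∈ Finset.range (m+1), w j * d j ≤ w m * ∑ j ∈ Finset.range (m+1), d j := by
  intro m
  induction m with
  | zero => intro _; simp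
  | succ k ih =>
    intro hk
    have hk' : k < p := by omega
    have h1 := ih hk'
    have hD' := hD k hk'
    have h2 : w (k+1) ≤ w k := hwd k
    rw [Finset.sum_range_succ (fun j => w j * d j), Finset.sum_range_succ d]
    nlinarith [h1]

lemma ppca_abel (w d : ℕ → ℝ) (hw0 : ∀ j, 0 ≤ w j) (hwd : ∀ j, w (j+1) ≤ w j)
    (p : ℕ) (hp : 0 < p) (hD : ∀ m, m < p → ∑ j ∈ Finset.range (m+1), d j ≤ 0) :
    ∑ j ∈ Finset.range p, w j * d j ≤ 0 := by
  obtain ⟨q, rfl⟩ : ∃ q, p = q + 1 := ⟨p - 1, by omega⟩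
  have h := ppca_abel_aux w d hwd (q+1) hD q (by omega)
  have h2 := hD q (by omega)
  nlinarith [hw0 q]

lemma ppca_sum_castLE {a b : ℕ} (h : a ≤ b) (f : Fin b → ℝ) :
    ∑ j : Fin a, f (Fin.castLE h j)
      = ∑ i ∈ Finset.univ.filter (fun i : Fin b => (i:ℕ) < a), f i := by
  classical
  set g : ℕ → ℝ := fun k => if hk : k < b then f ⟨k, hk⟩ else 0 with hgdef
  have step1 : ∑ j : Fin a, f (Fin.castLE h j) = ∑ k ∈ Finset.range a, g k := by
    rw [← Fin.sum_univ_eq_sum_range]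
    exact Finset.sum_congr rfl (fun j _ => by
      simp [hgdef, Fin.castLE, dif_pos (lt_of_lt_of_le j.2 h)])
  have step2 : ∑ k ∈ Finset.range a, g k
      = ∑ k ∈ Finset.range b, (if k < a then g k else 0) := by
    rw [show ∑ k ∈ Finset.range a, g k
        = ∑ k ∈ Finset.range a, (if k < a then g k else 0) from
      Finset.sum_congr rfl (fun k hk => by rw [if_pos (Finset.mem_range.mp hk)])]
    exact Finset.sum_subset (Finset.range_subset_range.mpr h)
      (fun k _ hk => by rw [if_neg (fun hka => hk (Finset.mem_range.mpr hka))])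
  have step3 : ∑ k ∈ Finset.range b, (if k < a then g k else 0)
      = ∑ i : Fin b, (if (i:ℕ) < a then f i else 0) := by
    rw [← Fin.sum_univ_eq_sum_range (fun k => if k < a then g k else 0)]
    exact Finset.sum_congr rfl (fun i _ => by
      by_cases hi : (i:ℕ) < a <;> simp [hgdef, hi, i.2])
  rw [step1, step2, step3, Finset.sum_ite, Finset.sum_const_zero, add_zero]

lemma ppca_filter_const {b a : ℕ} (h : a ≤ b) (c : ℝ) :
    ∑ i ∈ Finset.univ.filter (fun i : Fin b => (i:ℕ) < a), c = a * c := by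
  rw [← ppca_sum_castLE h (fun _ => c)]
  simp [Finset.sum_const, Finset.card_univ, nsmul_eq_mul]

lemma ppca_tsum_bound {n s : ℕ} (hs : s < n) (l : Fin n → ℝ) (hl : Antitone l)
    (t : Fin n → ℝ) (ht0 : ∀ i, 0 ≤ t i) (ht1 : ∀ i, t i ≤ 1)
    (hts : ∑ i, t i = (s:ℝ)) :
    ∑ i, l i * t i ≤ ∑ i ∈ Finset.univ.filter (fun i : Fin n => (i:ℕ) < s), l i := by
  set c : ℝ := l ⟨s, hs⟩ with hc
  have key : ∀ i : Fin n, l i * t i ≤ (if (i:ℕ) < s then l i - c else 0) + c * t i := by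
    intro i
    by_cases hi : (i:ℕ) < s
    · rw [if_pos hi]
      have hlc : c ≤ l i := hl (by simpa [Fin.le_def] using hi.le)
      nlinarith [ht1 i]
    · rw [if_neg hi]
      have hlc : l i ≤ c := hl (by simp [Fin.le_def]; omega)
      nlinarith [ht0 i]
  calc ∑ i, l i * t i
      ≤ ∑ i : Fin n, ((if (i:ℕ) < s then l i - c else 0) + c * t i) :=
        Finset.sum_le_sum (fun i _ => key i)
    _ = (∑ i ∈ Finset.univ.filter (fun i : Fin n => (i:ℕ) < s), (l i - c)) + c * (s:ℝ) := by
        rw [Finset.sum_add_distrib, Finset.sum_ite, Finset.sum_const_zero, add_zero,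
          ← Finset.mul_sum, hts]
    _ = ∑ i ∈ Finset.univ.filter (fun i : Fin n => (i:ℕ) < s), l i := by
        rw [Finset.sum_sub_distrib, ppca_filter_const hs.le c]; ring

lemma ppca_row_bound {n p : ℕ} (W : Matrix (Fin n) (Fin p) ℝ) (hW : Wᵀ * W = 1) (i : Fin n) :
    ∑ j, (W i j)^2 ≤ 1 := by
  set P := W * Wᵀ with hP
  have hPP : P * P = P := by
    rw [hP, Matrix.mul_assoc, ← Matrix.mul_assoc Wᵀ, hW, Matrix.one_mul]
  have hsym : ∀ k m, P k m = P m k := by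
    intro k m
    simp only [hP, Matrix.mul_apply, Matrix.transpose_apply]
    exact Finset.sum_congr rfl (fun j _ => mul_comm _ _)
  have ha : P i i = ∑ j, (W i j)^2 := by
    simp only [hP, Matrix.mul_apply, Matrix.transpose_apply, sq]
  have h2 : P i i = ∑ k, (P i k)^2 := by
    conv_lhs => rw [← hPP]
    rw [Matrix.mul_apply]
    exact Finset.sum_congr rfl (fun k _ => by rw [sq, hsym k i])
  have h3 : (P i i)^2 ≤ ∑ k, (P i k)^2 :=
    Finset.single_le_sum (f := fun k => (P i k)^2) (fun k _ => sq_nonneg _) (Finset.mem_univ i)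
  have h0 : 0 ≤ P i i := by rw [ha]; positivity
  nlinarith [h2, h3, ha]

lemma ppca_col_one {n p : ℕ} (W : Matrix (Fin n) (Fin p) ℝ) (hW : Wᵀ * W = 1) (j : Fin p) :
    ∑ i, (W i j)^2 = 1 := by
  have h : (Wᵀ * W) j j = (1 : Matrix (Fin p) (Fin p) ℝ) j j := by rw [hW]
  simpa [Matrix.mul_apply, Matrix.one_apply, sq] using h

lemma ppca_kyfan {n p : ℕ} (l : Fin n → ℝ) (hl : Antitone l)
    (W : Matrix (Fin n) (Fin p) ℝ) (hW : Wᵀ * W = 1) (s : ℕ) (hsn : s < n) (hsp : s ≤ p) :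
    ∑ j ∈ Finset.univ.filter (fun j : Fin p => (j:ℕ) < s), (∑ i, l i * (W i j)^2)
      ≤ ∑ i ∈ Finset.univ.filter (fun i : Fin n => (i:ℕ) < s), l i := by
  set t : Fin n → ℝ :=
    fun i => ∑ j ∈ Finset.univ.filter (fun j : Fin p => (j:ℕ) < s), (W i j)^2 with ht
  have ht0 : ∀ i, 0 ≤ t i := fun i => Finset.sum_nonneg fun j _ => sq_nonneg _
  have ht1 : ∀ i, t i ≤ 1 := fun i =>
    le_trans (Finset.sum_le_sum_of_subset_of_nonneg (Finset.filter_subset _ _)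
      (fun j _ _ => sq_nonneg _)) (ppca_row_bound W hW i)
  have hts : ∑ i, t i = (s:ℝ) := by
    rw [ht, Finset.sum_comm, Finset.sum_congr rfl (fun j _ => ppca_col_one W hW j),
      ppca_filter_const hsp (1:ℝ), mul_one]
  have hmain := ppca_tsum_bound hsn l hl t ht0 ht1 hts
  calc ∑ j ∈ Finset.univ.filter (fun j : Fin p => (j:ℕ) < s), (∑ i, l i * (W i j)^2)
      = ∑ i, l i * t i := by
        rw [Finset.sum_comm]
        exact Finset.sum_congr rfl (fun i _ => by rw [Finset.mul_sum])
    _ ≤ _ := hmain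

lemma ppca_q_eq {n p : ℕ} (l : Fin n → ℝ) (U : Matrix (Fin n) (Fin n) ℝ)
    (X : Matrix (Fin n) (Fin p) ℝ) (j : Fin p) :
    (Xᵀ * (U * Matrix.diagonal l * Uᵀ) * X) j j = ∑ i, l i * ((Uᵀ * X) i j)^2 := by
  have hassoc : Xᵀ * (U * Matrix.diagonal l * Uᵀ) * X
      = ((Uᵀ * X)ᵀ * Matrix.diagonal l) * (Uᵀ * X) := by
    rw [Matrix.transpose_mul, Matrix.transpose_transpose]
    simp only [Matrix.mul_assoc]
  rw [hassoc, Matrix.mul_apply]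
  refine Finset.sum_congr rfl (fun i _ => ?_)
  rw [Matrix.mul_diagonal, Matrix.transpose_apply]
  ring

lemma ppca_trace_spec {n : ℕ} (l : Fin n → ℝ) (U : Matrix (Fin n) (Fin n) ℝ)
    (hU : Uᵀ * U = 1) : (U * Matrix.diagonal l * Uᵀ).trace = ∑ i, l i := by
  rw [Matrix.trace_mul_comm, ← Matrix.mul_assoc, hU, Matrix.one_mul, Matrix.trace_diagonal]

lemma ppca_trace_diag_mul {p : ℕ} (e : Fin p → ℝ) (B : Matrix (Fin p) (Fin p) ℝ) :
    (Matrix.diagonal e * B).trace = ∑ j, e j * B j j := by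
  simp [Matrix.trace, Matrix.diag, Matrix.diagonal_mul]

lemma ppca_det {n p : ℕ} (X : Matrix (Fin n) (Fin p) ℝ) (hX : Xᵀ * X = 1)
    (α : Fin p → ℝ) (σ2 : ℝ) (hσ : σ2 ≠ 0) :
    (X * Matrix.diagonal α * Xᵀ + σ2 • 1).det = σ2 ^ n * ∏ j, (1 + α j / σ2) := by
  have harg : σ2 • (fun j : Fin p => α j / σ2) = α := by
    funext j
    simp only [Pi.smul_apply, smul_eq_mul]
    field_simp
  have hd : Matrix.diagonal α = σ2 • Matrix.diagonal (fun j : Fin p => α j / σ2) := by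
    rw [← Matrix.diagonal_smul, harg]
  have hK : X * Matrix.diagonal α * Xᵀ + σ2 • (1 : Matrix (Fin n) (Fin n) ℝ)
      = σ2 • (1 + (X * Matrix.diagonal (fun j : Fin p => α j / σ2)) * Xᵀ) := by
    rw [smul_add, ← Matrix.smul_mul, ← Matrix.mul_smul, ← hd, add_comm]
  rw [hK, Matrix.det_smul, Matrix.det_one_add_mul_comm, Fintype.card_fin]
  have h2 : Xᵀ * (X * Matrix.diagonal (fun j : Fin p => α j / σ2))
      = Matrix.diagonal (fun j : Fin p => α j / σ2) := by
    rw [← Matrix.mul_assoc, hX, Matrix.one_mul]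
  rw [h2, ← Matrix.diagonal_one, Matrix.diagonal_add, Matrix.det_diagonal]

lemma ppca_inv {n p : ℕ} (X : Matrix (Fin n) (Fin p) ℝ) (hX : Xᵀ * X = 1)
    (α : Fin p → ℝ) (σ2 : ℝ) (hσ : 0 < σ2) (hα : ∀ j, 0 ≤ α j) :
    (X * Matrix.diagonal α * Xᵀ + σ2 • 1)⁻¹
      = σ2⁻¹ • (1 : Matrix (Fin n) (Fin n) ℝ)
        - X * Matrix.diagonal (fun j => α j / (σ2 * (α j + σ2))) * Xᵀ := by
  apply Matrix.inv_eq_right_inv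
  set e : Fin p → ℝ := fun j => α j / (σ2 * (α j + σ2)) with he
  set A := X * Matrix.diagonal α * Xᵀ with hA
  set B := X * Matrix.diagonal e * Xᵀ with hB
  have hAB : A * B = X * Matrix.diagonal (fun j => α j * e j) * Xᵀ := by
    rw [hA, hB, ← Matrix.diagonal_mul_diagonal]
    simp only [Matrix.mul_assoc]
    rw [← Matrix.mul_assoc Xᵀ X, hX, Matrix.one_mul]
  have e2 : σ2⁻¹ • A = X * Matrix.diagonal (fun j => σ2⁻¹ * α j) * Xᵀ := by
    rw [hA, ← Matrix.smul_mul, ← Matrix.mul_smul, ← Matrix.diagonal_smul]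
    rfl
  have e3 : σ2 • B = X * Matrix.diagonal (fun j => σ2 * e j) * Xᵀ := by
    rw [hB, ← Matrix.smul_mul, ← Matrix.mul_smul, ← Matrix.diagonal_smul]
    rfl
  have key : σ2⁻¹ • A = A * B + σ2 • B := by
    rw [hAB, e2, e3, ← Matrix.add_mul, ← Matrix.mul_add, Matrix.diagonal_add]
    have harg : (fun j => σ2⁻¹ * α j) = (fun j => α j * e j + σ2 * e j) := by
      funext j
      have h1 : α j + σ2 ≠ 0 := by nlinarith [hα j]
      rw [he]
      field_simp
    rw [harg]
  have expand : (A + σ2 • 1) * (σ2⁻¹ • (1 : Matrix (Fin n) (Fin n) ℝ) - B)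
      = σ2⁻¹ • A - A * B + ((1 : Matrix (Fin n) (Fin n) ℝ) - σ2 • B) := by
    simp only [Matrix.add_mul, Matrix.mul_sub, Matrix.mul_smul, Matrix.smul_mul,
      Matrix.one_mul, Matrix.mul_one, smul_smul, smul_add,
      mul_inv_cancel₀ hσ.ne', inv_mul_cancel₀ hσ.ne', one_smul]
    abel
  rw [expand, key]
  abel

lemma ppca_decomp {n p : ℕ} (C : Matrix (Fin n) (Fin n) ℝ)
    (X : Matrix (Fin n) (Fin p) ℝ) (hX : Xᵀ * X = 1)
    (α : Fin p → ℝ) (σ2 : ℝ) (hσ : 0 < σ2) (hα : ∀ j, 0 ≤ α j) :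
    negLogLik (X * Matrix.diagonal α * Xᵀ + σ2 • 1) C
      = ((n:ℝ) - p) * Real.log σ2 + (∑ j, Real.log (α j + σ2))
        + C.trace / σ2
        - ∑ j, (α j / (σ2 * (α j + σ2))) * ((Xᵀ * C * X) j j) := by
  have hfac : ∀ j, 0 < 1 + α j / σ2 := by
    intro j
    have := hα j
    positivity
  have hlog : Real.log (X * Matrix.diagonal α * Xᵀ + σ2 • 1).det
      = ((n:ℝ) - p) * Real.log σ2 + ∑ j, Real.log (α j + σ2) := by
    rw [ppca_det X hX α σ2 hσ.ne']
    rw [Real.log_mul (pow_ne_zero _ hσ.ne')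
      (Finset.prod_ne_zero_iff.mpr (fun j _ => (hfac j).ne')), Real.log_pow,
      Real.log_prod (fun j _ => (hfac j).ne')]
    have : ∀ j : Fin p, Real.log (1 + α j / σ2) = Real.log (α j + σ2) - Real.log σ2 := by
      intro j
      have h1 : 1 + α j / σ2 = (α j + σ2) / σ2 := by field_simp; ring
      rw [h1, Real.log_div (by nlinarith [hα j]) hσ.ne']
    rw [Finset.sum_congr rfl (fun j _ => this j), Finset.sum_sub_distrib,
      Finset.sum_const, Finset.card_univ, Fintype.card_fin, nsmul_eq_mul]
    ring
  have htr : ((X * Matrix.diagonal α * Xᵀ + σ2 • 1)⁻¹ * C).trace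
      = C.trace / σ2 - ∑ j, (α j / (σ2 * (α j + σ2))) * ((Xᵀ * C * X) j j) := by
    rw [ppca_inv X hX α σ2 hσ hα, Matrix.sub_mul, Matrix.trace_sub, Matrix.smul_mul,
      Matrix.one_mul, Matrix.trace_smul]
    congr 1
    · rw [smul_eq_mul]; ring
    · set e : Fin p → ℝ := fun j => α j / (σ2 * (α j + σ2)) with he
      rw [show X * Matrix.diagonal e * Xᵀ * C = X * (Matrix.diagonal e * (Xᵀ * C)) by
        simp only [Matrix.mul_assoc]]
      rw [Matrix.trace_mul_comm]
      rw [show Matrix.diagonal e * (Xᵀ * C) * X = Matrix.diagonal e * (Xᵀ * C * X) by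
        simp only [Matrix.mul_assoc]]
      exact ppca_trace_diag_mul e _
  rw [negLogLik, hlog, htr]
  ring

lemma ppca_l_pos {n : ℕ} (C : Matrix (Fin n) (Fin n) ℝ) (hC : C.PosDef)
    (l : Fin n → ℝ) (U : Matrix (Fin n) (Fin n) ℝ) (hU : Uᵀ * U = 1)
    (hspec : C = U * Matrix.diagonal l * Uᵀ) (i : Fin n) : 0 < l i := by
  set x : Fin n → ℝ := fun k => U k i with hx
  have hdiag : ∀ m : Fin n, ∑ k, U k m * U k i = (1 : Matrix (Fin n) (Fin n) ℝ) m i := by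
    intro m
    have h : (Uᵀ * U) m i = (1 : Matrix (Fin n) (Fin n) ℝ) m i := by rw [hU]
    simpa [Matrix.mul_apply] using h
  have hxne : x ≠ 0 := by
    intro h0
    have h1 := hdiag i
    rw [Matrix.one_apply_eq] at h1
    have hz : ∀ k, U k i = 0 := fun k => congrFun h0 k
    simp [hz] at h1
  have hpos := hC.dotProduct_mulVec_pos hxne
  have hCentry : ∀ k m, C k m = ∑ a, U k a * l a * U m a := by
    intro k m
    rw [hspec, Matrix.mul_apply]
    exact Finset.sum_congr rfl (fun a _ => by rw [Matrix.mul_diagonal, Matrix.transpose_apply])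
  have hval : dotProduct x (C.mulVec x) = l i := by
    unfold dotProduct Matrix.mulVec dotProduct
    calc ∑ k, x k * ∑ m, C k m * x m
        = ∑ k, ∑ a, (U k a * x k) * (l a * ∑ m, U m a * x m) := by
          refine Finset.sum_congr rfl (fun k _ => ?_)
          have hinner : ∑ m, C k m * x m = ∑ a, U k a * (l a * ∑ m, U m a * x m) := by
            calc ∑ m, C k m * x m
                = ∑ m, ∑ a, U k a * l a * U m a * x m := by
                  refine Finset.sum_congr rfl (fun m _ => ?_)
                  rw [hCentry k m, Finset.sum_mul]
              _ = ∑ a, ∑ m, U k a * l a * U m a * x m := Finset.sum_comm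
              _ = ∑ a, U k a * (l a * ∑ m, U m a * x m) := by
                  refine Finset.sum_congr rfl (fun a _ => ?_)
                  rw [Finset.mul_sum, Finset.mul_sum]
                  exact Finset.sum_congr rfl (fun m _ => by ring)
          rw [hinner, Finset.mul_sum]
          exact Finset.sum_congr rfl (fun a _ => by ring)
      _ = ∑ a, ∑ k, (U k a * x k) * (l a * ∑ m, U m a * x m) := Finset.sum_comm
      _ = ∑ a, (∑ k, U k a * x k) * (l a * ∑ m, U m a * x m) := by
          refine Finset.sum_congr rfl (fun a _ => ?_)
          rw [Finset.sum_mul]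
      _ = ∑ a, ((1 : Matrix (Fin n) (Fin n) ℝ) a i) * (l a * ((1 : Matrix (Fin n) (Fin n) ℝ) a i)) := by
          exact Finset.sum_congr rfl (fun a _ => by rw [hdiag a])
      _ = l i := by
          simp [Matrix.one_apply]
  have hsx : star x = x := by simp
  rw [hsx, hval] at hpos
  exact hpos

lemma ppca_lower {n p : ℕ} (C : Matrix (Fin n) (Fin n) ℝ) (hC : C.PosDef)
    (l : Fin n → ℝ) (U : Matrix (Fin n) (Fin n) ℝ)
    (hlanti : Antitone l) (hU : Uᵀ * U = 1) (hU' : U * Uᵀ = 1)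
    (hspec : C = U * Matrix.diagonal l * Uᵀ)
    (hp1 : 1 ≤ p) (hpn : p < n)
    (σh : ℝ)
    (hσh : σh = (∑ j ∈ Finset.univ.filter (fun j : Fin n => p ≤ (j : ℕ)), l j) / ((n:ℝ) - p))
    (hσhpos : 0 < σh)
    (X : Matrix (Fin n) (Fin p) ℝ) (α : Fin p → ℝ) (σ2 : ℝ)
    (hX : Xᵀ * X = 1) (hα : ∀ j, 0 ≤ α j) (hσ : 0 < σ2)
    (hsort : ∀ j k : Fin p, j ≤ k → α k ≤ α j) :
    (∑ j : Fin p, Real.log (l (Fin.castLE hpn.le j))) + ((n:ℝ) - p) * Real.log σh + n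
      ≤ negLogLik (X * Matrix.diagonal α * Xᵀ + σ2 • 1) C := by
  classical
  have hnp : (0:ℝ) < (n:ℝ) - p := by
    have : (p:ℝ) < n := by exact_mod_cast hpn
    linarith
  set lt : Fin p → ℝ := fun j => l (Fin.castLE hpn.le j) with hlt
  set T : ℝ := ∑ j ∈ Finset.univ.filter (fun j : Fin n => p ≤ (j : ℕ)), l j with hT
  have hlpos : ∀ i, 0 < l i := ppca_l_pos C hC l U hU hspec
  have hltpos : ∀ j, 0 < lt j := fun j => hlpos _
  -- trace of C
  have htrC : C.trace = (∑ j, lt j) + T := by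
    rw [hspec, ppca_trace_spec l U hU]
    have hnot : Finset.univ.filter (fun i : Fin n => ¬ (i:ℕ) < p)
        = Finset.univ.filter (fun i : Fin n => p ≤ (i:ℕ)) := by
      apply Finset.filter_congr
      intro i _
      simp [not_lt]
    rw [← Finset.sum_filter_add_sum_filter_not Finset.univ (fun i : Fin n => (i:ℕ) < p) l,
      hnot, ← ppca_sum_castLE hpn.le l, hT]
  have hTσ : T = ((n:ℝ) - p) * σh := by
    rw [hσh, hT]
    field_simp
  -- weights and Rayleigh quotients
  set w : Fin p → ℝ := fun j => α j / (σ2 * (α j + σ2)) with hw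
  set q : Fin p → ℝ := fun j => (Xᵀ * C * X) j j with hq
  have hμpos : ∀ j, 0 < α j + σ2 := fun j => by nlinarith [hα j]
  have hwnn : ∀ j, 0 ≤ w j := fun j => div_nonneg (hα j) (by nlinarith [hα j])
  -- the W matrix
  set W : Matrix (Fin n) (Fin p) ℝ := Uᵀ * X with hW
  have hWorth : Wᵀ * W = 1 := by
    rw [hW, Matrix.transpose_mul, Matrix.transpose_transpose, Matrix.mul_assoc,
      ← Matrix.mul_assoc U Uᵀ X, hU', Matrix.one_mul, hX]
  have hqW : ∀ j, q j = ∑ i, l i * (W i j)^2 := by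
    intro j
    rw [hq]
    show (Xᵀ * C * X) j j = _
    rw [hspec]
    exact ppca_q_eq l U X j
  -- Step A : ∑ w q ≤ ∑ w lt
  have stepA : ∑ j, w j * q j ≤ ∑ j, w j * lt j := by
    set w' : ℕ → ℝ := fun k => if h : k < p then w ⟨k, h⟩ else 0 with hw'
    set d' : ℕ → ℝ := fun k => if h : k < p then q ⟨k, h⟩ - lt ⟨k, h⟩ else 0 with hd'
    have hw'0 : ∀ k, 0 ≤ w' k := by
      intro k
      by_cases h : k < p
      · simp only [hw', dif_pos h]; exact hwnn _
      · simp only [hw', dif_neg h]; exact le_refl _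
    have hw'dec : ∀ k, w' (k+1) ≤ w' k := by
      intro k
      by_cases h1 : k + 1 < p
      · have h2 : k < p := by omega
        simp only [hw', dif_pos h1, dif_pos h2]
        exact ppca_weight_mono hσ (hα ⟨k+1, h1⟩) (hsort ⟨k, h2⟩ ⟨k+1, h1⟩ (by simp [Fin.le_def]))
      · by_cases h2 : k < p
        · simp only [hw', dif_neg h1, dif_pos h2]; exact hwnn _
        · simp only [hw', dif_neg h1, dif_neg h2]; exact le_refl _
    have hD : ∀ m, m < p → ∑ k ∈ Finset.range (m+1), d' k ≤ 0 := by
      intro m hm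
      have hm1 : m + 1 ≤ p := hm
      have hm1n : m + 1 < n := by omega
      have e1 : ∑ k ∈ Finset.range (m+1), d' k
          = ∑ j ∈ Finset.univ.filter (fun j : Fin p => (j:ℕ) < m+1), (q j - lt j) := by
        rw [← Fin.sum_univ_eq_sum_range d' (m+1), ← ppca_sum_castLE hm1 (fun j => q j - lt j)]
        refine Finset.sum_congr rfl (fun j _ => ?_)
        simp only [hd', dif_pos (lt_of_lt_of_le j.2 hm1)]
        try rfl
      have e3 : ∑ i ∈ Finset.univ.filter (fun i : Fin n => (i:ℕ) < m+1), l i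
          = ∑ j ∈ Finset.univ.filter (fun j : Fin p => (j:ℕ) < m+1), lt j := by
        rw [← ppca_sum_castLE (le_of_lt hm1n) l, ← ppca_sum_castLE hm1 lt]
        rfl
      have hKF : ∑ j ∈ Finset.univ.filter (fun j : Fin p => (j:ℕ) < m+1), q j
          ≤ ∑ i ∈ Finset.univ.filter (fun i : Fin n => (i:ℕ) < m+1), l i := by
        have := ppca_kyfan l hlanti W hWorth (m+1) hm1n hm1
        calc ∑ j ∈ Finset.univ.filter (fun j : Fin p => (j:ℕ) < m+1), q j
            = ∑ j ∈ Finset.univ.filter (fun j : Fin p => (j:ℕ) < m+1), ∑ i, l i * (W i j)^2 :=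
              Finset.sum_congr rfl (fun j _ => hqW j)
          _ ≤ _ := this
      rw [e1, Finset.sum_sub_distrib]
      rw [← e3] at *
      linarith [hKF, e3]
    have habel := ppca_abel w' d' hw'0 hw'dec p hp1 hD
    have hconv : ∑ k ∈ Finset.range p, w' k * d' k = ∑ j : Fin p, w j * (q j - lt j) := by
      rw [← Fin.sum_univ_eq_sum_range (fun k => w' k * d' k) p]
      refine Finset.sum_congr rfl (fun j _ => ?_)
      simp only [hw', hd', dif_pos j.2]
      try rfl
    rw [hconv] at habel
    have : ∑ j : Fin p, w j * (q j - lt j) = ∑ j, w j * q j - ∑ j, w j * lt j := by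
      rw [← Finset.sum_sub_distrib]
      exact Finset.sum_congr rfl (fun j _ => by ring)
    linarith [habel, this.symm.le]
  -- pointwise scalar bounds
  have h2 : ∀ j : Fin p, Real.log (lt j) + 1
      ≤ Real.log (α j + σ2) + (lt j / σ2 - w j * lt j) := by
    intro j
    have hid : lt j / σ2 - w j * lt j = lt j / (α j + σ2) := by
      have hne1 : σ2 ≠ 0 := hσ.ne'
      have hne2 : α j + σ2 ≠ 0 := (hμpos j).ne'
      rw [hw]
      field_simp
      ring
    rw [hid]
    exact ppca_scalar_log (hltpos j) (hμpos j)
  have hsum2 : (∑ j, Real.log (lt j)) + p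
      ≤ ∑ j, (Real.log (α j + σ2) + (lt j / σ2 - w j * lt j)) := by
    have := Finset.sum_le_sum (fun j (_ : j ∈ Finset.univ) => h2 j)
    calc (∑ j, Real.log (lt j)) + p
        = ∑ j : Fin p, (Real.log (lt j) + 1) := by
          rw [Finset.sum_add_distrib, Finset.sum_const, Finset.card_univ, Fintype.card_fin,
            nsmul_eq_mul, mul_one]
      _ ≤ _ := this
  have hsplit2 : ∑ j, (Real.log (α j + σ2) + (lt j / σ2 - w j * lt j))
      = (∑ j, Real.log (α j + σ2)) + (∑ j, lt j) / σ2 - ∑ j, w j * lt j := by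
    rw [Finset.sum_add_distrib, Finset.sum_sub_distrib, Finset.sum_div]
    ring
  -- sigma part
  have h3 : ((n:ℝ) - p) * Real.log σh + ((n:ℝ) - p)
      ≤ ((n:ℝ) - p) * Real.log σ2 + T / σ2 := by
    have hs := ppca_scalar_log hσhpos hσ
    have hTdiv : T / σ2 = ((n:ℝ) - p) * (σh / σ2) := by
      rw [hTσ]; ring
    nlinarith [mul_le_mul_of_nonneg_left hs hnp.le]
  -- assemble
  rw [ppca_decomp C X hX α σ2 hσ hα, htrC]
  have hdiv : ((∑ j, lt j) + T) / σ2 = (∑ j, lt j) / σ2 + T / σ2 := add_div _ _ _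
  have hcast : (p:ℝ) + ((n:ℝ) - p) = n := by ring
  linarith [stepA, hsum2, hsplit2, h3, hdiv]

lemma ppca_hat_value {n p : ℕ} (C : Matrix (Fin n) (Fin n) ℝ) (hC : C.PosDef)
    (l : Fin n → ℝ) (U : Matrix (Fin n) (Fin n) ℝ)
    (hU : Uᵀ * U = 1)
    (hspec : C = U * Matrix.diagonal l * Uᵀ)
    (hpn : p < n)
    (σh : ℝ)
    (hσh : σh = (∑ j ∈ Finset.univ.filter (fun j : Fin n => p ≤ (j : ℕ)), l j) / ((n:ℝ) - p))
    (hσhpos : 0 < σh)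
    (Xh : Matrix (Fin n) (Fin p) ℝ)
    (hXh : Xh = fun i j => U i (Fin.castLE hpn.le j))
    (ah : Fin p → ℝ)
    (hah : ah = fun j => l (Fin.castLE hpn.le j) - σh)
    (hahnn : ∀ j, 0 ≤ ah j) :
    negLogLik (Xh * Matrix.diagonal ah * Xhᵀ + σh • 1) C
      = (∑ j : Fin p, Real.log (l (Fin.castLE hpn.le j))) + ((n:ℝ) - p) * Real.log σh + n := by
  classical
  have hnp : (0:ℝ) < (n:ℝ) - p := by
    have : (p:ℝ) < n := by exact_mod_cast hpn
    linarith
  set lt : Fin p → ℝ := fun j => l (Fin.castLE hpn.le j) with hlt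
  set T : ℝ := ∑ j ∈ Finset.univ.filter (fun j : Fin n => p ≤ (j : ℕ)), l j with hT
  have hlpos : ∀ i, 0 < l i := ppca_l_pos C hC l U hU hspec
  have hltpos : ∀ j, 0 < lt j := fun j => hlpos _
  have hμ : ∀ j, ah j + σh = lt j := by
    intro j
    rw [hah]
    ring_nf
    rfl
  have hentry : ∀ (a : Fin n) (b : Fin n), ∑ k, U k a * U k b = (1 : Matrix (Fin n) (Fin n) ℝ) a b := by
    intro a b
    have h : (Uᵀ * U) a b = (1 : Matrix (Fin n) (Fin n) ℝ) a b := by rw [hU]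
    simpa [Matrix.mul_apply] using h
  have hXhorth : Xhᵀ * Xh = 1 := by
    ext j k
    rw [Matrix.mul_apply]
    simp only [hXh, Matrix.transpose_apply]
    show ∑ x, U x (Fin.castLE hpn.le j) * U x (Fin.castLE hpn.le k) = _
    rw [hentry (Fin.castLE hpn.le j) (Fin.castLE hpn.le k)]
    rw [Matrix.one_apply, Matrix.one_apply]
    congr 1
    simp [Fin.castLE_inj]
  -- trace of C split
  have htrC : C.trace = (∑ j, lt j) + T := by
    rw [hspec, ppca_trace_spec l U hU]
    have hnot : Finset.univ.filter (fun i : Fin n => ¬ (i:ℕ) < p)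
        = Finset.univ.filter (fun i : Fin n => p ≤ (i:ℕ)) := by
      apply Finset.filter_congr
      intro i _
      simp [not_lt]
    rw [← Finset.sum_filter_add_sum_filter_not Finset.univ (fun i : Fin n => (i:ℕ) < p) l,
      hnot, ← ppca_sum_castLE hpn.le l, hT]
  have hTσ : T = ((n:ℝ) - p) * σh := by
    rw [hσh, hT]
    field_simp
  -- Rayleigh quotients at the optimum
  have hWhat : ∀ i j, (Uᵀ * Xh) i j = (1 : Matrix (Fin n) (Fin n) ℝ) i (Fin.castLE hpn.le j) := by
    intro i j
    rw [Matrix.mul_apply]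
    simp only [hXh, Matrix.transpose_apply]
    rw [← hentry i (Fin.castLE hpn.le j)]
  have hqhat : ∀ j : Fin p, (Xhᵀ * C * Xh) j j = lt j := by
    intro j
    rw [hspec, ppca_q_eq l U Xh j]
    rw [Finset.sum_congr rfl (fun i _ => by rw [hWhat i j])]
    simp [Matrix.one_apply]
    rfl
  rw [ppca_decomp C Xh hXhorth ah σh hσhpos hahnn, htrC]
  have hlog : ∀ j : Fin p, Real.log (ah j + σh) = Real.log (lt j) := fun j => by rw [hμ j]
  have hwq : ∀ j : Fin p, (ah j / (σh * (ah j + σh))) * ((Xhᵀ * C * Xh) j j) = lt j / σh - 1 := by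
    intro j
    rw [hqhat j, hμ j]
    have h1 : σh ≠ 0 := hσhpos.ne'
    have h2 : lt j ≠ 0 := (hltpos j).ne'
    have h3 : ah j = lt j - σh := by rw [hah]
    rw [h3]
    field_simp
  rw [Finset.sum_congr rfl (fun j _ => hlog j), Finset.sum_congr rfl (fun j _ => hwq j)]
  rw [Finset.sum_sub_distrib, ← Finset.sum_div, Finset.sum_const, Finset.card_univ,
    Fintype.card_fin, nsmul_eq_mul, mul_one]
  have hTdiv : T / σh = (n:ℝ) - p := by
    rw [hTσ, mul_div_assoc, div_self hσhpos.ne', mul_one]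
  have hdiv : ((∑ j, lt j) + T) / σh = (∑ j, lt j) / σh + T / σh := add_div _ _ _
  rw [hdiv, hTdiv]
  ring

/-- Probabilistic PCA: if `C = U diag(λ) Uᵀ` with `U` orthogonal and `λ` sorted decreasingly,
`1 ≤ p < n` and `λ_p > λ_j` for some `j > p`, then among all `K = X diag(α) Xᵀ + σ²·1` with
`X` orthonormal, `α_j ≥ 0`, `σ² > 0`, the minimizer of `log det K + tr(K⁻¹C)` is given by
taking the top-`p` eigenvectors, `σ̂² = (∑_{j>p} λ_j)/(n-p)`, `α̂_j = λ_j - σ̂² > 0`. -/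
theorem stmt8 {n : ℕ} (C : Matrix (Fin n) (Fin n) ℝ) (hC : C.PosDef)
    (l : Fin n → ℝ) (U : Matrix (Fin n) (Fin n) ℝ)
    (hlanti : Antitone l) (hU : Uᵀ * U = 1) (hU' : U * Uᵀ = 1)
    (hspec : C = U * Matrix.diagonal l * Uᵀ)
    (p : ℕ) (hp1 : 1 ≤ p) (hpn : p < n)
    (hex : ∃ j : Fin n, p ≤ (j : ℕ) ∧ l j < l ⟨p - 1, by omega⟩) :
    let σh : ℝ := (∑ j ∈ Finset.univ.filter (fun j : Fin n => p ≤ (j : ℕ)), l j) / (n - p)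
    let Xh : Matrix (Fin n) (Fin p) ℝ := fun i j => U i ⟨j.1, lt_trans j.2 hpn⟩
    let ah : Fin p → ℝ := fun j => l ⟨j.1, lt_trans j.2 hpn⟩ - σh
    (∀ j, 0 < ah j) ∧
      ∀ (X : Matrix (Fin n) (Fin p) ℝ) (α : Fin p → ℝ) (σ2 : ℝ),
        Xᵀ * X = 1 → (∀ j, 0 ≤ α j) → 0 < σ2 →
        negLogLik (Xh * Matrix.diagonal ah * Xhᵀ + σh • 1) C ≤
          negLogLik (X * Matrix.diagonal α * Xᵀ + σ2 • 1) C := by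
  classical
  intro σh Xh ah
  have hnp : (0:ℝ) < (n:ℝ) - p := by
    have : (p:ℝ) < n := by exact_mod_cast hpn
    linarith
  have hσh : σh = (∑ j ∈ Finset.univ.filter (fun j : Fin n => p ≤ (j : ℕ)), l j) / ((n:ℝ) - p) :=
    rfl
  have hlpos : ∀ i, 0 < l i := ppca_l_pos C hC l U hU hspec
  have hTpos : 0 < ∑ j ∈ Finset.univ.filter (fun j : Fin n => p ≤ (j : ℕ)), l j :=
    Finset.sum_pos (fun i _ => hlpos i)
      ⟨⟨p, hpn⟩, Finset.mem_filter.mpr ⟨Finset.mem_univ _, le_refl p⟩⟩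
  have hσhpos : 0 < σh := by
    rw [hσh]
    exact div_pos hTpos hnp
  -- σh < l ⟨p-1⟩
  have hkey : σh < l ⟨p - 1, by omega⟩ := by
    set c : ℝ := l ⟨p - 1, by omega⟩ with hc
    obtain ⟨j0, hj0p, hj0lt⟩ := hex
    have hsumlt : (∑ j ∈ Finset.univ.filter (fun j : Fin n => p ≤ (j : ℕ)), l j)
        < ∑ _j ∈ Finset.univ.filter (fun j : Fin n => p ≤ (j : ℕ)), c := by
      refine Finset.sum_lt_sum (fun i hi => ?_) ⟨j0, Finset.mem_filter.mpr ⟨Finset.mem_univ _, hj0p⟩, hj0lt⟩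
      have hip : p ≤ (i : ℕ) := (Finset.mem_filter.mp hi).2
      exact hlanti (by simp [Fin.le_def]; omega)
    have hconstsum : (∑ _j ∈ Finset.univ.filter (fun j : Fin n => p ≤ (j : ℕ)), c)
        = ((n:ℝ) - p) * c := by
      have hnot : Finset.univ.filter (fun i : Fin n => ¬ (i:ℕ) < p)
          = Finset.univ.filter (fun i : Fin n => p ≤ (i:ℕ)) := by
        apply Finset.filter_congr
        intro i _
        simp [not_lt]
      have htot := Finset.sum_filter_add_sum_filter_not Finset.univ
        (fun i : Fin n => (i:ℕ) < p) (fun _ => c)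
      rw [hnot] at htot
      have h1 : (∑ _i ∈ Finset.univ.filter (fun i : Fin n => (i:ℕ) < p), c) = (p:ℝ) * c :=
        ppca_filter_const hpn.le c
      have h2 : (∑ _i : Fin n, c) = (n:ℝ) * c := by
        rw [Finset.sum_const, Finset.card_univ, Fintype.card_fin, nsmul_eq_mul]
      rw [h1, h2] at htot
      linarith
    rw [hσh, div_lt_iff₀ hnp]
    rw [hconstsum] at hsumlt
    linarith
  have part1 : ∀ j, 0 < ah j := by
    intro j
    show 0 < l ⟨j.1, lt_trans j.2 hpn⟩ - σh
    have hle : l ⟨p - 1, by omega⟩ ≤ l ⟨j.1, lt_trans j.2 hpn⟩ := by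
      apply hlanti
      simp [Fin.le_def]
      omega
    linarith
  refine ⟨part1, ?_⟩
  intro X α σ2 hX hα hσ
  -- sort α decreasingly via a permutation
  set π := Tuple.sort (fun j : Fin p => -α j) with hπ
  have hmono := Tuple.monotone_sort (fun j : Fin p => -α j)
  have hsort : ∀ j k : Fin p, j ≤ k → α (π k) ≤ α (π j) := by
    intro j k hjk
    have h := hmono hjk
    simpa using h
  set X' : Matrix (Fin n) (Fin p) ℝ := Matrix.of (fun i j => X i (π j)) with hX'def
  set α' : Fin p → ℝ := fun j => α (π j) with hα'def
  have hform : ∀ (Y : Matrix (Fin n) (Fin p) ℝ) (β : Fin p → ℝ) (i k : Fin n),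
      (Y * Matrix.diagonal β * Yᵀ) i k = ∑ j, Y i j * β j * Y k j := by
    intro Y β i k
    rw [Matrix.mul_apply]
    exact Finset.sum_congr rfl fun j _ => by rw [Matrix.mul_diagonal, Matrix.transpose_apply]
  have hXX : X' * Matrix.diagonal α' * X'ᵀ = X * Matrix.diagonal α * Xᵀ := by
    ext i k
    rw [hform, hform]
    exact Equiv.sum_comp π (fun j => X i j * α j * X k j)
  have hX'orth : X'ᵀ * X' = 1 := by
    ext j k
    have h : (Xᵀ * X) (π j) (π k) = (1 : Matrix (Fin p) (Fin p) ℝ) (π j) (π k) := by rw [hX]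
    rw [Matrix.mul_apply] at h
    simp only [Matrix.transpose_apply] at h
    rw [Matrix.mul_apply]
    simp only [Matrix.transpose_apply]
    calc ∑ i, X' i j * X' i k = ∑ i, X i (π j) * X i (π k) := rfl
      _ = (1 : Matrix (Fin p) (Fin p) ℝ) (π j) (π k) := h
      _ = (1 : Matrix (Fin p) (Fin p) ℝ) j k := by
          rw [Matrix.one_apply, Matrix.one_apply]
          simp [Equiv.apply_eq_iff_eq]
  have hval := ppca_hat_value C hC l U hU hspec hpn σh hσh hσhpos Xh rfl ah rfl
    (fun j => (part1 j).le)
  have hlow := ppca_lower C hC l U hlanti hU hU' hspec hp1 hpn σh hσh hσhpos X' α' σ2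
    hX'orth (fun j => hα (π j)) hσ hsort
  rw [hXX] at hlow
  rw [hval]
  exact hlow
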